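/- Let C be a finite set of size k and let ω, η be distributions on C such that η is more equitable than ω (i.e. there exists α with η(α) > ω(α) such that η(α) ≤ η(β) for every β with η(β) < ω(β)). Then there exists an index ℓ ∈ {1,…,k} such that ω*(i) ≤ η*(i) for all 1 ≤ i ≤ ℓ, and there is a color α with η(α) > ω(α) satisfying ∑_{i=1}^ℓ η*(i) − ∑_{i=1}^ℓ ω*(i) ≥ η(α) − ω(α). -/

import Mathlib

/-- Any strictly monotone map between `Fin` types grows at least as fast as the identity. -/
lemma fin_strictMono_le {n k : ℕ} (g : Fin n → Fin k) (hg : StrictMono g) :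
    ∀ t : Fin n, (t : ℕ) ≤ (g t : ℕ) := by
  intro t
  obtain ⟨v, hv⟩ := t
  induction v with
  | zero => exact Nat.zero_le _
  | succ m ih =>
    have hm : m < n := Nat.lt_of_succ_lt hv
    have h1 : m ≤ (g ⟨m, hm⟩ : ℕ) := ih hm
    have h2 : g ⟨m, hm⟩ < g ⟨m + 1, hv⟩ := hg (by simp [Fin.lt_def])
    exact Nat.lt_of_le_of_lt h1 h2

/-- The partial sum of a monotone function over `Iic ℓ` is at most its sum over any
subset of cardinality `ℓ + 1`. -/
lemma sorted_sum_le {k : ℕ} (f : Fin k → ℝ) (hf : Monotone f) (ℓ : Fin k)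
    (J : Finset (Fin k)) (hJ : J.card = (ℓ : ℕ) + 1) :
    ∑ i ∈ Finset.Iic ℓ, f i ≤ ∑ j ∈ J, f j := by
  set g : Fin ((ℓ : ℕ) + 1) → Fin k := ⇑(J.orderEmbOfFin hJ) with hg
  have hginj : Function.Injective g := (J.orderEmbOfFin hJ).injective
  have hJim : J = Finset.image g Finset.univ := by
    ext x
    simp only [Finset.mem_image, Finset.mem_univ, true_and]
    constructor
    · intro hx
      have : x ∈ Set.range g := by
        rw [hg, Finset.range_orderEmbOfFin]; exact hx
      exact this
    · rintro ⟨t, rfl⟩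
      exact Finset.orderEmbOfFin_mem J hJ t
  have hcast : ∀ t : Fin ((ℓ : ℕ) + 1), (t : ℕ) < k := by
    intro t
    exact lt_of_le_of_lt (Nat.lt_succ_iff.mp t.isLt) ℓ.isLt
  have hIic : Finset.Iic ℓ = Finset.image (fun t : Fin ((ℓ : ℕ) + 1) => (⟨(t : ℕ), hcast t⟩ : Fin k)) Finset.univ := by
    ext x
    simp only [Finset.mem_Iic, Finset.mem_image, Finset.mem_univ, true_and]
    constructor
    · intro hx
      exact ⟨⟨(x : ℕ), Nat.lt_succ_of_le hx⟩, rfl⟩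
    · rintro ⟨t, rfl⟩
      exact Fin.mk_le_mk.mpr (Nat.lt_succ_iff.mp t.isLt)
  rw [hJim, hIic, Finset.sum_image (by intro a _ b _ h; simpa [Fin.ext_iff] using h),
    Finset.sum_image (fun a _ b _ h => hginj h)]
  apply Finset.sum_le_sum
  intro t _
  apply hf
  have := fin_strictMono_le g (J.orderEmbOfFin hJ).strictMono t
  exact this

/-- Counting lemma: if at least `i+1` colors have `ω`-value `≤ c`, then the `i`-th smallest
value of `ω` is at most `c`. -/
lemma sorted_le_of_count {C : Type*} [Fintype C] [DecidableEq C] {k : ℕ}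
    (ω : C → ℝ) (ωst : Fin k → ℝ) (σ : Fin k ≃ C) (hσ : ωst = ω ∘ σ)
    (hmono : Monotone ωst) (i : Fin k) (c : ℝ) (T : Finset C)
    (hT : ∀ β ∈ T, ω β ≤ c) (hcard : (i : ℕ) + 1 ≤ T.card) : ωst i ≤ c := by
  set J : Finset (Fin k) := T.image σ.symm with hJ
  have hJcard : J.card = T.card := Finset.card_image_of_injective _ σ.symm.injective
  have : ∃ j ∈ J, i ≤ j := by
    by_contra h
    push_neg at h
    have hsub : J ⊆ Finset.Iio i := by
      intro j hj
      exact Finset.mem_Iio.mpr (h j hj)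
    have := Finset.card_le_card hsub
    rw [hJcard, Fin.card_Iio] at this
    omega
  obtain ⟨j, hjJ, hij⟩ := this
  obtain ⟨β, hβT, hβ⟩ := Finset.mem_image.mp hjJ
  calc ωst i ≤ ωst j := hmono hij
    _ = ω (σ j) := by rw [hσ]; rfl
    _ = ω β := by rw [← hβ, Equiv.apply_symm_apply]
    _ ≤ c := hT β hβT

/-- If η is more equitable than ω, then there is an index ℓ such that the
nondecreasing rearrangements satisfy ω*(i) ≤ η*(i) for all i ≤ ℓ, and a color α with
η(α) > ω(α) such that the difference of the partial sums up to ℓ is at least η(α) − ω(α). -/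
theorem stmt_1 {C : Type*} [Fintype C] {k : ℕ} (hk : Fintype.card C = k)
    (ω η : C → ℝ)
    (hω0 : ∀ α, 0 ≤ ω α) (hω1 : ∀ α, ω α ≤ 1) (hωsum : ∑ α, ω α = 1)
    (hη0 : ∀ α, 0 ≤ η α) (hη1 : ∀ α, η α ≤ 1) (hηsum : ∑ α, η α = 1)
    (hME : ∃ α, ω α < η α ∧ ∀ β, η β < ω β → η α ≤ η β)
    (ωst ηst : Fin k → ℝ) (σ τ : Fin k ≃ C)
    (hσ : ωst = ω ∘ σ) (hτ : ηst = η ∘ τ)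
    (hmono₁ : Monotone ωst) (hmono₂ : Monotone ηst) :
    ∃ ℓ : Fin k, (∀ i, i ≤ ℓ → ωst i ≤ ηst i) ∧
      ∃ α, ω α < η α ∧
        η α - ω α ≤ ∑ i ∈ Finset.Iic ℓ, ηst i - ∑ i ∈ Finset.Iic ℓ, ωst i := by
  classical
  obtain ⟨α, hα1, hα2⟩ := hME
  -- position of α in the η-sorted order
  set m : Fin k := τ.symm α with hm
  have hηst_m : ηst m = η α := by rw [hτ]; simp [hm]
  -- ℓ : the least index whose ηst-value is ≥ η α
  set S : Finset (Fin k) := Finset.univ.filter (fun i => η α ≤ ηst i) with hS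
  have hSne : S.Nonempty := ⟨m, by simp [hS, hηst_m]⟩
  set ℓ : Fin k := S.min' hSne with hℓ
  have hℓS : ℓ ∈ S := S.min'_mem hSne
  have hℓα : η α ≤ ηst ℓ := by
    have := Finset.mem_filter.mp hℓS
    exact this.2
  have hℓm : ℓ ≤ m := S.min'_le m (by simp [hS, hηst_m])
  have hηst_ℓ : ηst ℓ = η α := le_antisymm (hηst_m ▸ hmono₂ hℓm) hℓα
  have hlt : ∀ j : Fin k, j < ℓ → ηst j < η α := by
    intro j hj
    by_contra h
    push_neg at h
    have : ℓ ≤ j := S.min'_le j (by simp [hS, h])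
    exact absurd hj (not_lt.mpr this)
  -- colors below η α have ω ≤ η
  have hωτ : ∀ j : Fin k, ηst j < η α → ω (τ j) ≤ ηst j := by
    intro j hj
    by_contra h
    push_neg at h
    have hηj : η (τ j) = ηst j := by rw [hτ]; rfl
    have := hα2 (τ j) (by rw [hηj]; exact hηj ▸ (hηj ▸ h))
    rw [hηj] at this
    exact absurd hj (not_lt.mpr this)
  have hανotin : ∀ j : Fin k, j < ℓ → τ j ≠ α := by
    intro j hj habs
    have : ηst j = η α := by rw [hτ]; simp [habs]
    exact absurd this (ne_of_lt (hlt j hj))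
  refine ⟨ℓ, ?_, α, hα1, ?_⟩
  · -- pointwise comparison up to ℓ
    intro i hi
    rcases lt_or_eq_of_le hi with hi | hi
    · -- i < ℓ : use colors τ j, j ≤ i
      apply sorted_le_of_count ω ωst σ hσ hmono₁ i (ηst i) ((Finset.Iic i).image τ)
      · intro β hβ
        obtain ⟨j, hj, rfl⟩ := Finset.mem_image.mp hβ
        have hji : j ≤ i := Finset.mem_Iic.mp hj
        have : ηst j < η α := hlt j (lt_of_le_of_lt hji hi)
        exact le_trans (hωτ j this) (hmono₂ hji)
      · rw [Finset.card_image_of_injective _ τ.injective, Fin.card_Iic]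
    · -- i = ℓ : use colors τ j, j < ℓ together with α
      rw [hi]
      apply sorted_le_of_count ω ωst σ hσ hmono₁ ℓ (ηst ℓ)
        (insert α ((Finset.Iio ℓ).image τ))
      · intro β hβ
        rcases Finset.mem_insert.mp hβ with rfl | hβ
        · rw [hηst_ℓ]; exact le_of_lt hα1
        · obtain ⟨j, hj, rfl⟩ := Finset.mem_image.mp hβ
          have hji : j < ℓ := Finset.mem_Iio.mp hj
          have h1 : ηst j < η α := hlt j hji
          exact le_trans (le_of_lt (lt_of_le_of_lt (hωτ j h1) h1)) hℓα
      · rw [Finset.card_insert_of_notMem, Finset.card_image_of_injective _ τ.injective,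
          Fin.card_Iio]
        intro habs
        obtain ⟨j, hj, hjα⟩ := Finset.mem_image.mp habs
        exact hανotin j (Finset.mem_Iio.mp hj) hjα
  · -- sum comparison
    set A : Finset C := insert α ((Finset.Iio ℓ).image τ) with hA
    have hαni : α ∉ (Finset.Iio ℓ).image τ := by
      intro habs
      obtain ⟨j, hj, hjα⟩ := Finset.mem_image.mp habs
      exact hανotin j (Finset.mem_Iio.mp hj) hjα
    have hAcard : A.card = (ℓ : ℕ) + 1 := by
      rw [hA, Finset.card_insert_of_notMem hαni,
        Finset.card_image_of_injective _ τ.injective, Fin.card_Iio]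
    -- sum of ω over Iic ℓ is ≤ sum of ω over A
    have hωle : ∑ i ∈ Finset.Iic ℓ, ωst i ≤ ∑ β ∈ A, ω β := by
      have := sorted_sum_le ωst hmono₁ ℓ (A.image σ.symm)
        (by rw [Finset.card_image_of_injective _ σ.symm.injective, hAcard])
      refine le_trans this (le_of_eq ?_)
      rw [Finset.sum_image (fun a _ b _ h => σ.symm.injective h)]
      apply Finset.sum_congr rfl
      intro β _
      rw [hσ]; simp
    -- sum of η over A equals sum of ηst over Iic ℓ
    have hηeq : ∑ β ∈ A, η β = ∑ i ∈ Finset.Iic ℓ, ηst i := by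
      rw [hA, Finset.sum_insert hαni,
        Finset.sum_image (fun a _ b _ h => τ.injective h)]
      have h1 : ∑ j ∈ Finset.Iio ℓ, η (τ j) = ∑ j ∈ Finset.Iio ℓ, ηst j := by
        apply Finset.sum_congr rfl
        intro j _
        rw [hτ]; rfl
      rw [h1]
      rw [← Finset.Iio_insert ℓ, Finset.sum_insert (by simp), hηst_ℓ]
    -- each color in A other than α satisfies ω ≤ η
    have hAle : ∑ β ∈ A, (η β - ω β) ≥ η α - ω α := by
      rw [hA, Finset.sum_insert hαni]
      have : 0 ≤ ∑ β ∈ (Finset.Iio ℓ).image τ, (η β - ω β) := by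
        apply Finset.sum_nonneg
        intro β hβ
        obtain ⟨j, hj, rfl⟩ := Finset.mem_image.mp hβ
        have h1 : ηst j < η α := hlt j (Finset.mem_Iio.mp hj)
        have h2 : η (τ j) = ηst j := by rw [hτ]; rfl
        have := hωτ j h1
        rw [h2]
        linarith
      linarith
    have hsplit : ∑ β ∈ A, (η β - ω β) = ∑ β ∈ A, η β - ∑ β ∈ A, ω β :=
      Finset.sum_sub_distrib _ _
    rw [hsplit, hηeq] at hAle
    linarith
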